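/- arXiv:1711.06331 — 3 statements merged into one kernel-verified Lean document; each statement's English description precedes it below -/
import Mathlib

section
/- Let C be a category with limits, X : ℤ → C a functor with X(k) = 0 (a zero object) for all k > n-1, i.e. X ∈ D(ℤ)(≤ n-1) (pointed setting). Then the unit X → [≤ n]_* ([≤ n]^* X) of the right Kan extension adjunction along ℤ_{≤n} → ℤ is an isomorphism. -/
open CategoryTheory CategoryTheory.Limits

/-- The poset `ℤ_{≤ n}`, with the convention that there is a unique morphism `i ⟶ k`
exactly when `k ≤ i` (i.e. the dual order). -/
def Zle (n : ℤ) : Type := {i : ℤ // i ≤ n}ᵒᵈ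

noncomputable instance (n : ℤ) : Preorder (Zle n) := by unfold Zle; infer_instance

/-- The fully faithful inclusion `[≤ n] : ℤ_{≤ n} ⥤ ℤ`. -/
noncomputable def incLe (n : ℤ) : Zle n ⥤ ℤᵒᵈ :=
  Monotone.functor (f := fun i => OrderDual.toDual (OrderDual.ofDual i).val)
    (Monotone.dual (f := fun i : {i : ℤ // i ≤ n} => (i : ℤ)) (fun _ _ h => h))

/-- morphisms in `Zle n` from the dual order. -/
noncomputable def Zle.homOf {n : ℤ} {a b : Zle n} (h : (OrderDual.ofDual (α := {i : ℤ // i ≤ n}) b).val ≤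
    (OrderDual.ofDual (α := {i : ℤ // i ≤ n}) a).val) : a ⟶ b :=
  homOfLE (by exact h)

instance (n : ℤ) : (incLe n).Faithful where
  map_injective _ := Subsingleton.elim _ _

instance (n : ℤ) : (incLe n).Full where
  map_surjective {a b} f := ⟨Zle.homOf (by exact leOfHom f), Subsingleton.elim _ _⟩

lemma isIso_of_isZero {C : Type*} [Category C] {A B : C} (hA : IsZero A) (hB : IsZero B)
    (f : A ⟶ B) : IsIso f :=
  ⟨(hB.iso hA).hom, hA.eq_of_src _ _, hB.eq_of_src _ _⟩

/-- if `X : ℤ ⥤ C` satisfies `X k = 0` for all `k > n - 1` (i.e. `k ≥ n`),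
then the unit `X ⟶ [≤ n]_* ([≤ n]^* X)` of the (pointwise) right Kan extension adjunction
along `ℤ_{≤ n} ⥤ ℤ` is an isomorphism. -/
theorem stmt10 {C : Type*} [Category C] [HasLimitsOfSize.{0, 0} C] [HasZeroObject C]
    (n : ℤ) (X : ℤᵒᵈ ⥤ C)
    (hX : ∀ k : ℤ, n - 1 < k → IsZero (X.obj (OrderDual.toDual k))) :
    IsIso (((incLe n).ranAdjunction C).unit.app X) := by
  rw [NatTrans.isIso_iff_isIso_app]
  intro j
  by_cases hk : (OrderDual.ofDual j : ℤ) ≤ n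
  · -- `j` is in the image of `incLe n`; use the counit triangle identity.
    let i : Zle n := OrderDual.toDual (⟨OrderDual.ofDual j, hk⟩ : {i : ℤ // i ≤ n})
    have h := (incLe n).ranCounit_app_app_ranAdjunction_unit_app_app (H := C) X i
    have : IsIso ((((incLe n).ranAdjunction C).unit.app X).app j ≫
        (((incLe n).ranCounit).app (incLe n ⋙ X)).app i) := by
      show IsIso ((((incLe n).ranAdjunction C).unit.app X).app ((incLe n).obj i) ≫ _)
      rw [h]; infer_instance
    have hg : IsIso ((((incLe n).ranCounit).app (incLe n ⋙ X)).app i) :=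
      (Functor.isPointwiseRightKanExtensionRanCounit (incLe n) (incLe n ⋙ X) ((incLe n).obj i)).isIso_hom_app
    exact @IsIso.of_isIso_comp_right _ _ _ _ _ _ ((((incLe n).ranCounit).app (incLe n ⋙ X)).app i) hg this
  · -- `ofDual j > n`, so both source and target are zero objects.
    push_neg at hk
    have hsrc : IsZero (X.obj j) := hX (OrderDual.ofDual j) (by omega)
    -- initial object of the structured arrow category: `n` itself.
    let i₀ : StructuredArrow j (incLe n) :=
      StructuredArrow.mk (Y := OrderDual.toDual (⟨n, le_refl n⟩ : {i : ℤ // i ≤ n}))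
        (homOfLE (show j ≤ OrderDual.toDual (n : ℤ) by exact hk.le))
    have hinit : Limits.IsInitial i₀ := by
      apply Limits.IsInitial.ofUniqueHom
        (fun Y => StructuredArrow.homMk
          (Zle.homOf (by exact (OrderDual.ofDual (Y.right : Zle n)).2))
          (Subsingleton.elim _ _))
      intro Y m
      apply StructuredArrow.hom_ext
      exact Subsingleton.elim _ _
    have htgt : IsZero (((incLe n).ran.obj (incLe n ⋙ X)).obj j) := by
      have e1 : ((incLe n).ran.obj (incLe n ⋙ X)).obj j ≅
          limit (StructuredArrow.proj j (incLe n) ⋙ (incLe n ⋙ X)) :=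
        (incLe n).ranObjObjIsoLimit (incLe n ⋙ X) j
      have e2 : limit (StructuredArrow.proj j (incLe n) ⋙ (incLe n ⋙ X)) ≅
          (StructuredArrow.proj j (incLe n) ⋙ (incLe n ⋙ X)).obj i₀ :=
        IsLimit.conePointUniqueUpToIso (limit.isLimit _) (limitOfDiagramInitial hinit _)
      exact (hX n (by omega)).of_iso (e1 ≪≫ e2)
    exact isIso_of_isZero hsrc htgt _
end

section
/- Let T be a triangulated category and (S, U) a pair of full triangulated subcategories such that the inclusion S → T admits a right adjoint r, the inclusion U → T admits a left adjoint l, and S = Ker l. Then for every X ∈ T there is a distinguished triangle r'(X) → X → l'(X) → Σ r'(X), where r' = (inclusion)∘r and l' = (inclusion)∘l, with r'(X) ∈ S and l'(X) ∈ U; i.e., (S, U) forms a stable t-structure. -/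
open CategoryTheory CategoryTheory.Limits CategoryTheory.Pretriangulated
  CategoryTheory.Preadditive

namespace CategoryTheory.Triangulated

/-- The former Mathlib structure `Triangulated.Subcategory` (removed upstream), restored
with its old definition. -/
structure Subcategory (C : Type*) [Category C] [HasZeroObject C] [HasShift C ℤ]
    [Preadditive C] [∀ n : ℤ, (shiftFunctor C n).Additive] [Pretriangulated C] where
  P : C → Prop
  zero' : ∃ (Z : C) (_ : IsZero Z), P Z
  shift (X : C) (n : ℤ) : P X → P (X⟦n⟧)
  ext₂' (T : Triangle C) (_ : T ∈ distTriang C) : P T.obj₁ → P T.obj₃ →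
    ObjectProperty.isoClosure P T.obj₂

end CategoryTheory.Triangulated

/-- given full triangulated subcategories `S`, `U` of a triangulated
category `T` such that the inclusion of `S` has a right adjoint `r`, the inclusion of `U`
has a left adjoint `l`, and `S = Ker l`, every `X : T` fits into a distinguished triangle
`r'(X) ⟶ X ⟶ l'(X) ⟶ Σ r'(X)` whose first map is the counit and second map is the unit;
i.e. `(S, U)` is a stable t-structure. -/
theorem stmt12 {T : Type*} [Category T] [Preadditive T] [HasZeroObject T] [HasShift T ℤ]
    [∀ n : ℤ, (shiftFunctor T n).Additive] [Pretriangulated T] [IsTriangulated T]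
    (S U : Triangulated.Subcategory T)
    (r : T ⥤ ObjectProperty.FullSubcategory S.P) (adj_r : ObjectProperty.ι S.P ⊣ r)
    (l : T ⥤ ObjectProperty.FullSubcategory U.P) (adj_l : l ⊣ ObjectProperty.ι U.P)
    (hker : ∀ X : T, S.P X ↔ IsZero ((ObjectProperty.ι U.P).obj (l.obj X))) :
    ∀ X : T, ∃ h : (ObjectProperty.ι U.P).obj (l.obj X) ⟶
        ((ObjectProperty.ι S.P).obj (r.obj X))⟦(1 : ℤ)⟧,
      Triangle.mk (adj_r.counit.app X) (adj_l.unit.app X) h ∈ distTriang T := by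
  -- surjectivity of precomposition with the unit
  have surj : ∀ (A : T) (Z : ObjectProperty.FullSubcategory U.P)
      (t : A ⟶ (ObjectProperty.ι U.P).obj Z),
      adj_l.unit.app A ≫
        (ObjectProperty.ι U.P).map ((adj_l.homEquiv A Z).symm t) = t := by
    intro A Z t
    exact (adj_l.homEquiv A Z).apply_symm_apply t
  -- injectivity of precomposition with the unit
  have inj : ∀ (A : T) (Z : ObjectProperty.FullSubcategory U.P)
      (f : (ObjectProperty.ι U.P).obj (l.obj A) ⟶
        (ObjectProperty.ι U.P).obj Z),
      adj_l.unit.app A ≫ f = 0 → f = 0 := by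
    intro A Z f hf
    have h1 : adj_l.homEquiv A Z ((ObjectProperty.ι U.P).preimage f) =
        adj_l.homEquiv A Z 0 := by
      rw [adj_l.homEquiv_unit, adj_l.homEquiv_unit,
        (ObjectProperty.ι U.P).map_preimage, Functor.map_zero, comp_zero, hf]
    have h2 : (ObjectProperty.ι U.P).preimage f = 0 :=
      (adj_l.homEquiv A Z).injective h1
    rw [← (ObjectProperty.ι U.P).map_preimage f, h2, Functor.map_zero]
  -- Hom(S, U) = 0
  have hSU : ∀ (A : T) (_ : S.P A) (Z : ObjectProperty.FullSubcategory U.P)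
      (f : A ⟶ (ObjectProperty.ι U.P).obj Z), f = 0 := by
    intro A hA Z f
    have hz : IsZero ((ObjectProperty.ι U.P).obj (l.obj A)) := (hker A).1 hA
    have hz' : (ObjectProperty.ι U.P).map ((adj_l.homEquiv A Z).symm f) = 0 :=
      hz.eq_of_src _ _
    rw [← surj A Z f, hz', comp_zero]
  intro X
  obtain ⟨B, b, w, hT⟩ := distinguished_cocone_triangle₁ (adj_l.unit.app X)
  have hb : ∀ (Z : ObjectProperty.FullSubcategory U.P) (t : X ⟶ (ObjectProperty.ι U.P).obj Z),
      b ≫ t = 0 := by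
    intro Z t
    have h12 : b ≫ adj_l.unit.app X = 0 := comp_distTriang_mor_zero₁₂ _ hT
    rw [← surj X Z t, ← Category.assoc, h12, zero_comp]
  -- Hom(B, U) = 0
  have hBU : ∀ (Z : ObjectProperty.FullSubcategory U.P)
      (g : B ⟶ (ObjectProperty.ι U.P).obj Z), g = 0 := by
    intro Z g
    have hZ1 : U.P (((ObjectProperty.ι U.P).obj Z)⟦(1 : ℤ)⟧) := U.shift _ 1 Z.2
    have h23 : adj_l.unit.app X ≫ w = 0 := comp_distTriang_mor_zero₂₃ _ hT
    have h2 : w ≫ (shiftFunctor T (1 : ℤ)).map g = 0 := by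
      refine inj X ⟨_, hZ1⟩ (w ≫ (shiftFunctor T (1 : ℤ)).map g) ?_
      rw [← Category.assoc, h23, zero_comp]
    obtain ⟨h, hh⟩ := Triangle.yoneda_exact₃ _ (rot_of_distTriang _ hT)
      ((shiftFunctor T (1 : ℤ)).map g) h2
    dsimp [Triangle.mk, Triangle.rotate] at h hh
    have hbh : (shiftFunctor T (1 : ℤ)).map b ≫ h = 0 := by
      have hb' : b ≫ (shiftFunctor T (1 : ℤ)).preimage h = 0 := hb Z _
      rw [← (shiftFunctor T (1 : ℤ)).map_preimage h, ← Functor.map_comp, hb',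
        Functor.map_zero]
    apply (shiftFunctor T (1 : ℤ)).map_injective
    rw [hh, Functor.map_zero]
    dsimp
    rw [neg_comp, hbh, neg_zero]
  -- l.obj B is zero, hence S.P B
  have hη0 : adj_l.unit.app B = 0 := hBU (l.obj B) (adj_l.unit.app B)
  have hidz : 𝟙 (l.obj B) = (0 : l.obj B ⟶ l.obj B) := by
    apply (adj_l.homEquiv B (l.obj B)).injective
    rw [adj_l.homEquiv_unit, adj_l.homEquiv_unit, Functor.map_zero, comp_zero, hη0,
      zero_comp]
  have hzB : IsZero ((ObjectProperty.ι U.P).obj (l.obj B)) := by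
    rw [IsZero.iff_id_eq_zero, ← (ObjectProperty.ι U.P).map_id, hidz,
      Functor.map_zero]
  have hSB : S.P B := (hker B).2 hzB
  -- b factors through the counit
  have hbφ : (ObjectProperty.ι S.P).map (adj_r.homEquiv ⟨B, hSB⟩ X b) ≫
      adj_r.counit.app X = b := by
    exact (adj_r.homEquiv ⟨B, hSB⟩ X).symm_apply_apply b
  set φ : B ⟶ (ObjectProperty.ι S.P).obj (r.obj X) :=
    (ObjectProperty.ι S.P).map (adj_r.homEquiv ⟨B, hSB⟩ X b) with hφ
  -- uniqueness of factorizations through the counit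
  have epsInj : ∀ (W : T) (hW : S.P W)
      (s s' : W ⟶ (ObjectProperty.ι S.P).obj (r.obj X)),
      s ≫ adj_r.counit.app X = s' ≫ adj_r.counit.app X → s = s' := by
    intro W hW s s' hss
    have h1 : (ObjectProperty.ι S.P).map ((ObjectProperty.ι S.P).preimage
        (show (ObjectProperty.ι S.P).obj ⟨W, hW⟩ ⟶ _ from s)) = s :=
      (ObjectProperty.ι S.P).map_preimage _
    have h2 : (ObjectProperty.ι S.P).map ((ObjectProperty.ι S.P).preimage
        (show (ObjectProperty.ι S.P).obj ⟨W, hW⟩ ⟶ _ from s')) = s' :=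
      (ObjectProperty.ι S.P).map_preimage _
    have h3 : (adj_r.homEquiv ⟨W, hW⟩ X).symm ((ObjectProperty.ι S.P).preimage s) =
        (adj_r.homEquiv ⟨W, hW⟩ X).symm ((ObjectProperty.ι S.P).preimage s') := by
      rw [adj_r.homEquiv_counit, adj_r.homEquiv_counit, h1, h2, hss]
    have h4 := (adj_r.homEquiv ⟨W, hW⟩ X).symm.injective h3
    rw [← h1, ← h2, h4]
  -- existence and uniqueness of factorizations through b
  have bSurj : ∀ (W : T) (_ : S.P W) (t : W ⟶ X), ∃ s : W ⟶ B, t = s ≫ b := by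
    intro W hW t
    exact Triangle.coyoneda_exact₂ _ hT t (hSU W hW (l.obj X) (t ≫ adj_l.unit.app X))
  have bInj : ∀ (W : T) (_ : S.P W) (s : W ⟶ B), s ≫ b = 0 → s = 0 := by
    intro W hW s hs
    obtain ⟨u, hu⟩ := Triangle.coyoneda_exact₂ _ (inv_rot_of_distTriang _ hT) s hs
    have hZm : U.P (((ObjectProperty.ι U.P).obj (l.obj X))⟦(-1 : ℤ)⟧) :=
      U.shift _ (-1) (l.obj X).2
    have hu0 : u = 0 := hSU W hW ⟨_, hZm⟩ u
    rw [hu, hu0, zero_comp]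
    rfl
  -- construct the inverse of φ
  obtain ⟨ψ, hψ⟩ := bSurj ((ObjectProperty.ι S.P).obj (r.obj X)) (r.obj X).2
    (adj_r.counit.app X)
  have hφψ : φ ≫ ψ = 𝟙 B := by
    have h1 : (φ ≫ ψ - 𝟙 B) ≫ b = 0 := by
      rw [sub_comp, Category.assoc, ← hψ, hbφ, Category.id_comp, sub_self]
    have h2 := bInj B hSB _ h1
    rwa [sub_eq_zero] at h2
  have hψφ : ψ ≫ φ = 𝟙 ((ObjectProperty.ι S.P).obj (r.obj X)) := by
    refine epsInj _ (r.obj X).2 _ _ ?_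
    rw [Category.assoc, hbφ, ← hψ]
    exact (Category.id_comp _).symm
  refine ⟨w ≫ (shiftFunctor T (1 : ℤ)).map φ, ?_⟩
  refine isomorphic_distinguished _ hT _ ?_
  refine Triangle.isoMk _ _ ⟨ψ, φ, hψφ, hφψ⟩ (Iso.refl X) (Iso.refl _) ?_ ?_ ?_
  · dsimp [Triangle.mk]
    rw [Category.comp_id, ← hψ]
  · dsimp [Triangle.mk]
    rw [Category.comp_id, Category.id_comp]
  · dsimp [Triangle.mk]
    rw [Category.id_comp, Category.assoc, ← Functor.map_comp, hφψ,
      CategoryTheory.Functor.map_id, Category.comp_id]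
end

section
/- Let C be an additive category and let X, Y : ℤ → C be functors such that Y(k) = 0 for all k > 0 and the structure map X(k) → X(k-1) is an isomorphism for all k ≤ 1 (with ℤ having morphisms k → j for j ≤ k). Let s = [-1]^* denote precomposition with k ↦ k-1, and α : id ⇒ s the transformation induced by the canonical φ : id_ℤ ⇒ [-1]. Then the map Nat(s(Y), X) → Nat(Y, X), g ↦ g ∘ α(Y), is bijective. -/
open CategoryTheory CategoryTheory.Limits

/-- The translation functor `[-1] : ℤ → ℤ`, `k ↦ k - 1`, on the poset `ℤ` viewed as a
category with a unique morphism `k ⟶ j` exactly when `j ≤ k` (i.e. `ℤᵒᵈ`). -/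
noncomputable def shiftFun : ℤᵒᵈ ⥤ ℤᵒᵈ :=
  Monotone.functor (f := fun k => OrderDual.toDual (OrderDual.ofDual k - 1))
    (Monotone.dual (f := fun x : ℤ => x - 1) (fun _ _ h => sub_le_sub_right h 1))

/-- The canonical natural transformation `φ : id ⇒ [-1]`. -/
noncomputable def phi : 𝟭 ℤᵒᵈ ⟶ shiftFun where
  app k := homOfLE (show OrderDual.ofDual k - 1 ≤ OrderDual.ofDual k from
    sub_le_self _ zero_le_one)
  naturality _ _ _ := Subsingleton.elim _ _

/-- The structure map `x_k : X k ⟶ X (k-1)` of a functor `X : ℤ ⥤ C`. -/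
noncomputable def structMap {C : Type*} [Category C] (X : ℤᵒᵈ ⥤ C) (k : ℤ) :
    X.obj (OrderDual.toDual k) ⟶ X.obj (OrderDual.toDual (k - 1)) :=
  X.map (homOfLE (OrderDual.toDual_le_toDual.mpr (sub_le_self k zero_le_one)))


section Aux

variable {C : Type*} [Category C]

lemma phi_structMap (X : ℤᵒᵈ ⥤ C) (k : ℤᵒᵈ) :
    X.map (phi.app k) = structMap X (OrderDual.ofDual k) := rfl

lemma structMap_comm (X : ℤᵒᵈ ⥤ C) {a b : ℤᵒᵈ} (u : a ⟶ b) :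
    structMap X (OrderDual.ofDual a) ≫ X.map (shiftFun.map u) =
      X.map u ≫ structMap X (OrderDual.ofDual b) := by
  rw [← phi_structMap, ← phi_structMap]
  erw [← X.map_comp, ← X.map_comp]
  exact congrArg X.map (Subsingleton.elim _ _)

end Aux

/-- axiom (F6) in functor categories: let `C` be an additive category and
`X Y : ℤ ⥤ C` with `Y k = 0` for `k > 0` and with the structure maps `X k ⟶ X (k-1)`
isomorphisms for `k ≤ 1`.  With `s(Y) = [-1]^* Y = shiftFun ⋙ Y` and
`α(Y) = φ ▷ Y : Y ⟶ s(Y)`, the map `Nat(s(Y), X) → Nat(Y, X)`, `g ↦ g ∘ α(Y)`,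
is bijective. -/
theorem stmt17 {C : Type*} [Category C] [Preadditive C] [HasZeroObject C]
    (X Y : ℤᵒᵈ ⥤ C)
    (hY : ∀ k : ℤ, 0 < k → IsZero (Y.obj (OrderDual.toDual k)))
    (hX : ∀ k : ℤ, k ≤ 1 → IsIso (structMap X k)) :
    Function.Bijective
      (fun g : (shiftFun ⋙ Y) ⟶ X => Y.leftUnitor.inv ≫ Functor.whiskerRight phi Y ≫ g) := by
  constructor
  · intro g1 g2 h
    have key : ∀ g : (shiftFun ⋙ Y) ⟶ X, ∀ k : ℤᵒᵈ,
        g.app k ≫ structMap X (OrderDual.ofDual k) =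
          Y.map (phi.app (shiftFun.obj k)) ≫ g.app (shiftFun.obj k) := by
      intro g k
      have h1 := g.naturality (phi.app k)
      simp only [Functor.id_obj, Functor.comp_obj, Functor.comp_map] at h1
      rw [← phi_structMap]
      erw [← h1]
      exact congrArg (· ≫ g.app _) (congrArg Y.map (Subsingleton.elim _ _))
    ext k
    by_cases hk : OrderDual.ofDual k ≤ 1
    · haveI := hX _ hk
      refine (cancel_mono (structMap X (OrderDual.ofDual k))).mp ?_
      erw [key, key]
      have := congrArg (fun t => t.app (shiftFun.obj k)) h
      simp only [NatTrans.comp_app, Functor.leftUnitor_inv_app, Functor.whiskerRight_app,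
        Category.id_comp] at this
      exact this
    · exact (hY (OrderDual.ofDual k - 1) (by omega)).eq_of_src _ _
  · intro f
    refine ⟨{ app := fun k =>
        if h : OrderDual.ofDual k ≤ 1 then
          haveI := hX _ h
          f.app (shiftFun.obj k) ≫ inv (I := hX _ h) (structMap X (OrderDual.ofDual k))
        else 0, naturality := ?_ }, ?_⟩
    · intro a b u
      have hba : OrderDual.ofDual b ≤ OrderDual.ofDual a := leOfHom u
      by_cases ha : OrderDual.ofDual a ≤ 1
      · have hb : OrderDual.ofDual b ≤ 1 := le_trans hba ha
        haveI := hX _ ha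
        haveI := hX _ hb
        rw [dif_pos ha, dif_pos hb]
        have nat := f.naturality (shiftFun.map u)
        simp only [Functor.comp_map] at nat ⊢
        rw [← Category.assoc, nat, Category.assoc, Category.assoc]
        congr 1
        erw [IsIso.comp_inv_eq, Category.assoc, ← structMap_comm, ← Category.assoc,
          IsIso.inv_hom_id, Category.id_comp]
        rfl
      · rw [dif_neg ha, zero_comp]
        exact (hY (OrderDual.ofDual a - 1) (by omega)).eq_of_src _ _
    · ext k
      simp only [NatTrans.comp_app, Functor.leftUnitor_inv_app, Functor.whiskerRight_app,
        Category.id_comp]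
      by_cases hk : OrderDual.ofDual k ≤ 1
      · haveI := hX _ hk
        have nat := f.naturality (phi.app k)
        simp only [Functor.id_obj] at nat
        rw [dif_pos hk, ← Category.assoc, nat, phi_structMap]
        erw [Category.assoc, IsIso.hom_inv_id, Category.comp_id]
      · rw [dif_neg hk, comp_zero]
        exact ((hY (OrderDual.ofDual k) (by omega)).eq_of_src _ _).symm
end
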